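/- With G(λ) = (λ²−r²)F(λ) where F is analytic on the square [−r,r]×[−r,r] and |F(μ+iν)| ≤ M/|ν|: on the horizontal sides ν = ±r one has |G(λ)| ≤ 3rM, and on the vertical sides μ = ±r one has |G(λ)| ≤ 3rM; hence by the maximum modulus principle |G(λ)| ≤ 3rM throughout the square. -/

import Mathlib

open Set Complex Bornology

/-- With `G(λ) = (λ²−r²)F(λ)`, `F` analytic on the square `[−r,r]×[−r,r]` with
`|F(μ+iν)| ≤ M/|ν|`: on the horizontal sides `ν = ±r` and on the vertical sides
`μ = ±r` one has `|G(λ)| ≤ 3rM`; hence, by the maximum modulus principle,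
`|G(λ)| ≤ 3rM` throughout the square. -/
theorem stmt13 (r M : ℝ) (hr : 0 < r) (hM : 0 < M) (F : ℂ → ℂ)
    (hF : ∀ z : ℂ, |z.re| ≤ r → |z.im| ≤ r → DifferentiableAt ℂ F z)
    (hbound : ∀ z : ℂ, |z.re| ≤ r → |z.im| ≤ r → z.im ≠ 0 →
      ‖F z‖ ≤ M / |z.im|) :
    (∀ z : ℂ, |z.re| ≤ r → (z.im = r ∨ z.im = -r) →
      ‖(z ^ 2 - (r : ℂ) ^ 2) * F z‖ ≤ 3 * r * M) ∧
    (∀ z : ℂ, |z.im| ≤ r → (z.re = r ∨ z.re = -r) →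
      ‖(z ^ 2 - (r : ℂ) ^ 2) * F z‖ ≤ 3 * r * M) ∧
    (∀ z : ℂ, |z.re| ≤ r → |z.im| ≤ r →
      ‖(z ^ 2 - (r : ℂ) ^ 2) * F z‖ ≤ 3 * r * M) := by
  have h3rM : 0 ≤ 3 * r * M := by positivity
  -- horizontal sides
  have hhor : ∀ z : ℂ, |z.re| ≤ r → (z.im = r ∨ z.im = -r) →
      ‖(z ^ 2 - (r : ℂ) ^ 2) * F z‖ ≤ 3 * r * M := by
    intro z hre him
    have himr : |z.im| = r := by rcases him with h | h <;> rw [h] <;> simp [abs_of_pos hr, hr.le]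
    have hFb : ‖F z‖ ≤ M / r := by
      have := hbound z hre himr.le (by rw [← abs_ne_zero, himr]; exact hr.ne')
      rwa [himr] at this
    have h1 : ‖z ^ 2 - (r : ℂ) ^ 2‖ ≤ 3 * r ^ 2 := by
      calc ‖z ^ 2 - (r : ℂ) ^ 2‖
          ≤ ‖z ^ 2‖ + ‖(r : ℂ) ^ 2‖ := by
            exact (norm_sub_le _ _)
        _ = ‖z‖ ^ 2 + r ^ 2 := by
            simp [map_pow, abs_of_pos hr, sq_abs]
        _ ≤ (2 * r ^ 2) + r ^ 2 := by
            have : ‖z‖ ^ 2 = z.re ^ 2 + z.im ^ 2 := by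
              rw [Complex.sq_norm, Complex.normSq_apply]; ring
            rw [this]
            have h1 : z.re ^ 2 ≤ r ^ 2 := by
              rw [← _root_.sq_abs z.re]; exact pow_le_pow_left₀ (abs_nonneg _) hre 2
            have h2 : z.im ^ 2 ≤ r ^ 2 := by
              rw [← _root_.sq_abs z.im, himr]
            nlinarith
        _ = 3 * r ^ 2 := by ring
    calc ‖(z ^ 2 - (r : ℂ) ^ 2) * F z‖
        = ‖z ^ 2 - (r : ℂ) ^ 2‖ * ‖F z‖ := norm_mul _ _
      _ ≤ (3 * r ^ 2) * (M / r) := by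
          exact mul_le_mul h1 hFb (norm_nonneg _) (by positivity)
      _ = 3 * r * M := by field_simp
  -- vertical sides
  have hver : ∀ z : ℂ, |z.im| ≤ r → (z.re = r ∨ z.re = -r) →
      ‖(z ^ 2 - (r : ℂ) ^ 2) * F z‖ ≤ 3 * r * M := by
    intro z him hre
    have hrer : |z.re| = r := by rcases hre with h | h <;> rw [h] <;> simp [abs_of_pos hr, hr.le]
    by_cases hν : z.im = 0
    · have hz0 : z ^ 2 - (r : ℂ) ^ 2 = 0 := by
        rcases hre with h | h
        · have : z = (r : ℂ) := Complex.ext (by simp [h]) (by simp [hν])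
          rw [this]; ring
        · have : z = -(r : ℂ) := Complex.ext (by simp [h]) (by simp [hν])
          rw [this]; ring
      rw [hz0, zero_mul, norm_zero]; exact h3rM
    · have hFb := hbound z hrer.le him hν
      have hfac : ‖z ^ 2 - (r : ℂ) ^ 2‖ ≤ (3 * r) * |z.im| := by
        have key : z ^ 2 - (r : ℂ) ^ 2 = (z - r) * (z + r) := by ring
        rw [key, norm_mul]
        rcases hre with h | h
        · have h1 : ‖z - r‖ = |z.im| := by
            have hz : z - (r : ℂ) = (z.im : ℂ) * Complex.I := by
              apply Complex.ext <;> simp [h]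
            rw [hz, norm_mul, Complex.norm_real, Real.norm_eq_abs, Complex.norm_I, mul_one]
          have h2 : ‖z + r‖ ≤ 3 * r := by
            calc ‖z + r‖ ≤ |(z + (r:ℂ)).re| + |(z + (r:ℂ)).im| :=
                  Complex.norm_le_abs_re_add_abs_im _
              _ ≤ 2 * r + r := by
                  simp only [Complex.add_re, Complex.add_im, Complex.ofReal_re,
                    Complex.ofReal_im, add_zero, h]
                  have : |r + r| = 2 * r := by rw [abs_of_pos (by linarith)]; ring
                  linarith [this.le]
              _ = 3 * r := by ring
          rw [h1, mul_comm]
          exact mul_le_mul_of_nonneg_right h2 (abs_nonneg _)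
        · have h1 : ‖z + r‖ = |z.im| := by
            have hz : z + (r : ℂ) = (z.im : ℂ) * Complex.I := by
              apply Complex.ext <;> simp [h]
            rw [hz, norm_mul, Complex.norm_real, Real.norm_eq_abs, Complex.norm_I, mul_one]
          have h2 : ‖z - r‖ ≤ 3 * r := by
            calc ‖z - r‖ ≤ |(z - (r:ℂ)).re| + |(z - (r:ℂ)).im| :=
                  Complex.norm_le_abs_re_add_abs_im _
              _ ≤ 2 * r + r := by
                  simp only [Complex.sub_re, Complex.sub_im, Complex.ofReal_re,
                    Complex.ofReal_im, sub_zero, h]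
                  have : |-r - r| = 2 * r := by rw [abs_of_neg (by linarith)]; ring
                  linarith [this.le]
              _ = 3 * r := by ring
          rw [h1]
          exact mul_le_mul_of_nonneg_right h2 (abs_nonneg _)
      have him0 : (0:ℝ) < |z.im| := abs_pos.mpr hν
      calc ‖(z ^ 2 - (r : ℂ) ^ 2) * F z‖
          = ‖z ^ 2 - (r : ℂ) ^ 2‖ * ‖F z‖ := norm_mul _ _
        _ ≤ ((3 * r) * |z.im|) * (M / |z.im|) := by
            exact mul_le_mul hfac hFb (norm_nonneg _) (by positivity)
        _ = 3 * r * M := by field_simp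
  refine ⟨hhor, hver, ?_⟩
  -- maximum modulus on the square
  intro z hre him
  set G : ℂ → ℂ := fun w => (w ^ 2 - (r : ℂ) ^ 2) * F w with hG
  have hrr : -r < r := by linarith
  have hsq : closure (Ioo (-r) r ×ℂ Ioo (-r) r) = Icc (-r) r ×ℂ Icc (-r) r := by
    rw [closure_reProdIm, closure_Ioo hrr.ne]
  have hGd : DiffContOnCl ℂ G (Ioo (-r) r ×ℂ Ioo (-r) r) := by
    apply DifferentiableOn.diffContOnCl
    rw [hsq]
    intro w hw
    have hw1 : |w.re| ≤ r := abs_le.mpr hw.1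
    have hw2 : |w.im| ≤ r := abs_le.mpr hw.2
    exact (((differentiable_id.pow 2).sub_const _).differentiableAt.mul
      (hF w hw1 hw2)).differentiableWithinAt
  have hclos : z ∈ closure (Ioo (-r) r ×ℂ Ioo (-r) r) := by
    rw [hsq]; exact ⟨abs_le.mp hre, abs_le.mp him⟩
  have := Complex.norm_le_of_forall_mem_frontier_norm_le
    ((Metric.isBounded_Ioo _ _).reProdIm (Metric.isBounded_Ioo _ _)) hGd (C := 3 * r * M) ?_ hclos
  · simpa only [hG] using this
  · intro w hw
    rw [frontier_reProdIm, closure_Ioo hrr.ne, frontier_Ioo hrr] at hw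
    rcases hw with hw | hw
    · -- horizontal side
      have h1 : |w.re| ≤ r := abs_le.mpr hw.1
      have h2 : w.im = -r ∨ w.im = r := by simpa using hw.2
      simpa only [hG] using hhor w h1 h2.symm
    · -- vertical side
      have h1 : |w.im| ≤ r := abs_le.mpr hw.2
      have h2 : w.re = -r ∨ w.re = r := by simpa using hw.1
      simpa only [hG] using hver w h1 h2.symm
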